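/- The map sending a misère-Nim position x to the pair (nim-sum of x, whether x contains a pile of size ≥ 2) is a monoid homomorphism from the free commutative monoid of positions to the product of (ℕ, XOR) with the two-element join-semilattice B₁ = ({false,true}, ∨), and the misère-Nim outcome of a position is determined by this pair. -/

import Mathlib

instance : Std.Commutative (α := ℕ) (· ^^^ ·) := ⟨Nat.xor_comm⟩
instance : Std.Associative (α := ℕ) (· ^^^ ·) := ⟨Nat.xor_assoc⟩

/-- The nim-sum (bitwise XOR) of a finite multiset of pile sizes. -/
def nimSum (s : Multiset ℕ) : ℕ := Multiset.fold (· ^^^ ·) 0 s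

/-- A move in Nim: remove a positive number of counters from a single pile. -/
def NimMove (s t : Multiset ℕ) : Prop :=
  ∃ a ∈ s, ∃ b < a, t = b ::ₘ s.erase a

mutual
inductive MiserePPos : Multiset ℕ → Prop
  | mk (s : Multiset ℕ) : (∃ t, NimMove s t) →
      (∀ t, NimMove s t → MisereNPos t) → MiserePPos s

inductive MisereNPos : Multiset ℕ → Prop
  | stuck (s : Multiset ℕ) : (∀ t, ¬ NimMove s t) → MisereNPos s
  | mk (s t : Multiset ℕ) : NimMove s t → MiserePPos t → MisereNPos s
end

/-- `Large s` : the position contains a pile of size at least 2. -/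
def Large (s : Multiset ℕ) : Prop := ∃ a ∈ s, 2 ≤ a

section Aux

open Multiset

lemma nimSum_zero : nimSum 0 = 0 := rfl

lemma nimSum_cons (a : ℕ) (s : Multiset ℕ) : nimSum (a ::ₘ s) = a ^^^ nimSum s :=
  @Multiset.fold_cons_left ℕ (· ^^^ ·) ⟨Nat.xor_comm⟩ ⟨Nat.xor_assoc⟩ 0 a s

lemma nimSum_add (s t : Multiset ℕ) : nimSum (s + t) = nimSum s ^^^ nimSum t := by
  have := @Multiset.fold_add ℕ (· ^^^ ·) ⟨Nat.xor_comm⟩ ⟨Nat.xor_assoc⟩ 0 0 s t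
  simpa [nimSum] using this

lemma nimSum_erase {a : ℕ} {s : Multiset ℕ} (h : a ∈ s) :
    nimSum (s.erase a) = a ^^^ nimSum s := by
  conv_rhs => rw [← Multiset.cons_erase h, nimSum_cons, ← Nat.xor_assoc, Nat.xor_self,
    Nat.zero_xor]

lemma nimSum_le_one {s : Multiset ℕ} (h : ∀ a ∈ s, a ≤ 1) : nimSum s ≤ 1 := by
  induction s using Multiset.induction with
  | empty => simp [nimSum_zero]
  | cons a s ih =>
    rw [nimSum_cons]
    have ha : a ≤ 1 := h a (Multiset.mem_cons_self a s)
    have hs : nimSum s ≤ 1 := ih fun b hb => h b (Multiset.mem_cons_of_mem hb)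
    set m := nimSum s
    interval_cases a <;> interval_cases m <;> decide

lemma nimSum_eq_zero {s : Multiset ℕ} (h : ∀ a ∈ s, a = 0) : nimSum s = 0 := by
  induction s using Multiset.induction with
  | empty => rfl
  | cons a s ih =>
    rw [nimSum_cons, h a (Multiset.mem_cons_self a s),
      ih fun b hb => h b (Multiset.mem_cons_of_mem hb)]
    rfl

lemma nimSum_testBit_false {s : Multiset ℕ} {i : ℕ} (h : ∀ a ∈ s, a.testBit i = false) :
    (nimSum s).testBit i = false := by
  induction s using Multiset.induction with
  | empty => simp [nimSum_zero]
  | cons a s ih =>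
    rw [nimSum_cons, Nat.testBit_xor, h a (Multiset.mem_cons_self a s),
      ih fun b hb => h b (Multiset.mem_cons_of_mem hb)]
    rfl

lemma move_sum_lt {s t : Multiset ℕ} (h : NimMove s t) : t.sum < s.sum := by
  obtain ⟨a, ha, b, hb, rfl⟩ := h
  rw [Multiset.sum_cons]
  conv_rhs => rw [← Multiset.cons_erase ha, Multiset.sum_cons]
  omega

lemma move_of_pos {a : ℕ} {s : Multiset ℕ} (ha : a ∈ s) (h1 : 1 ≤ a) :
    NimMove s (0 ::ₘ s.erase a) := ⟨a, ha, 0, h1, rfl⟩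

/-- The invariant determining misère P-positions. -/
def Good (s : Multiset ℕ) : Prop :=
  (Large s ∧ nimSum s = 0) ∨ (¬ Large s ∧ nimSum s = 1)

lemma not_large_iff {s : Multiset ℕ} : ¬ Large s ↔ ∀ a ∈ s, a ≤ 1 := by
  unfold Large; push_neg
  exact ⟨fun h a ha => by have := h a ha; omega, fun h a ha => by have := h a ha; omega⟩

lemma good_move {s t : Multiset ℕ} (hG : Good s) (hm : NimMove s t) : ¬ Good t := by
  obtain ⟨a, ha, b, hb, rfl⟩ := hm
  have hns : nimSum (b ::ₘ s.erase a) = b ^^^ (a ^^^ nimSum s) := by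
    rw [nimSum_cons, nimSum_erase ha]
  rcases hG with ⟨hL, h0⟩ | ⟨hL, h1⟩
  · -- Large, nim-sum 0
    rw [h0, Nat.xor_zero] at hns
    have hne : b ^^^ a ≠ 0 := mt xor_eq_zero_iff.1 (by omega)
    rintro (⟨_, h0'⟩ | ⟨hLt, h1'⟩)
    · rw [hns] at h0'; exact hne h0'
    · -- target has all piles ≤ 1
      rw [not_large_iff] at hLt
      have herase : ∀ c ∈ s.erase a, c ≤ 1 := fun c hc =>
        hLt c (Multiset.mem_cons_of_mem hc)
      have ha2 : 2 ≤ a := by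
        obtain ⟨c, hc, hc2⟩ := hL
        have hc0 : c ∈ a ::ₘ s.erase a := by rw [Multiset.cons_erase ha]; exact hc
        rcases Multiset.mem_cons.1 hc0 with rfl | hc'
        · exact hc2
        · have := herase c hc'; omega
      have : nimSum (s.erase a) ≤ 1 := nimSum_le_one herase
      rw [nimSum_erase ha, h0, Nat.xor_zero] at this
      omega
  · -- all piles ≤ 1, nim-sum 1
    rw [not_large_iff] at hL
    have ha1 : a = 1 := by have := hL a ha; omega
    have hb0 : b = 0 := by omega
    subst ha1; subst hb0
    rw [h1] at hns
    have hns' : nimSum (0 ::ₘ s.erase 1) = 0 := by rw [hns]; simp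
    have hnl : ¬ Large (0 ::ₘ s.erase 1) := by
      rw [not_large_iff]
      intro c hc
      rcases Multiset.mem_cons.1 hc with rfl | hc'
      · omega
      · exact hL c (Multiset.mem_of_mem_erase hc')
    rintro (⟨hL', _⟩ | ⟨_, h1'⟩)
    · exact hnl hL'
    · rw [hns'] at h1'; exact one_ne_zero h1'.symm

lemma good_exists_move {s : Multiset ℕ} (hG : Good s) : ∃ t, NimMove s t := by
  rcases hG with ⟨⟨a, ha, ha2⟩, _⟩ | ⟨hL, h1⟩
  · exact ⟨_, move_of_pos ha (by omega)⟩
  · by_contra h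
    push_neg at h
    have : ∀ a ∈ s, a = 0 := by
      intro a ha
      by_contra h0
      exact h _ (move_of_pos ha (by omega))
    rw [nimSum_eq_zero this] at h1
    exact one_ne_zero h1.symm

lemma bad_move {s : Multiset ℕ} (hB : ¬ Good s) (hex : ∃ t, NimMove s t) :
    ∃ t, NimMove s t ∧ Good t := by
  by_cases hL : Large s
  · have hn : nimSum s ≠ 0 := fun h => hB (Or.inl ⟨hL, h⟩)
    obtain ⟨i, hi, hhigh⟩ := Nat.exists_most_significant_bit hn
    have hex_bit : ∃ a ∈ s, a.testBit i = true := by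
      by_contra h
      push_neg at h
      have := nimSum_testBit_false (s := s) (i := i) fun a ha =>
        Bool.not_eq_true _ ▸ (h a ha)
      rw [hi] at this; simp at this
    obtain ⟨a, ha, habit⟩ := hex_bit
    have hlt : a ^^^ nimSum s < a := by
      refine Nat.lt_of_testBit i ?_ habit fun j hj => ?_
      · rw [Nat.testBit_xor, habit, hi]; rfl
      · rw [Nat.testBit_xor, hhigh j hj, Bool.xor_false]
    have hns0 : nimSum ((a ^^^ nimSum s) ::ₘ s.erase a) = 0 := by
      rw [nimSum_cons, nimSum_erase ha]
      exact Nat.xor_self _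
    by_cases hLt : Large ((a ^^^ nimSum s) ::ₘ s.erase a)
    · exact ⟨_, ⟨a, ha, _, hlt, rfl⟩, Or.inl ⟨hLt, hns0⟩⟩
    · -- only one large pile (a); misère endgame move
      rw [not_large_iff] at hLt
      have herase : ∀ c ∈ s.erase a, c ≤ 1 := fun c hc =>
        hLt c (Multiset.mem_cons_of_mem hc)
      have ha2 : 2 ≤ a := by
        obtain ⟨c, hc, hc2⟩ := hL
        have hc0 : c ∈ a ::ₘ s.erase a := by rw [Multiset.cons_erase ha]; exact hc
        rcases Multiset.mem_cons.1 hc0 with rfl | hc'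
        · exact hc2
        · have := herase c hc'; omega
      set p := nimSum (s.erase a) with hp
      have hp1 : p ≤ 1 := nimSum_le_one herase
      refine ⟨(1 ^^^ p) ::ₘ s.erase a, ⟨a, ha, 1 ^^^ p, ?_, rfl⟩, Or.inr ⟨?_, ?_⟩⟩
      · have : 1 ^^^ p ≤ 1 := by interval_cases p <;> decide
        omega
      · rw [not_large_iff]
        intro c hc
        rcases Multiset.mem_cons.1 hc with rfl | hc'
        · interval_cases p <;> decide
        · exact herase c hc'
      · rw [nimSum_cons, ← hp, Nat.xor_assoc, Nat.xor_self, Nat.xor_zero]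
  · -- all piles ≤ 1
    have hall := not_large_iff.1 hL
    have hle : nimSum s ≤ 1 := nimSum_le_one hall
    have hn1 : nimSum s ≠ 1 := fun h => hB (Or.inr ⟨hL, h⟩)
    have h0 : nimSum s = 0 := by omega
    obtain ⟨t, a, ha, b, hb, rfl⟩ := hex
    have ha1 : a = 1 := by have := hall a ha; omega
    refine ⟨0 ::ₘ s.erase a, move_of_pos ha (by omega), Or.inr ⟨?_, ?_⟩⟩
    · rw [not_large_iff]
      intro c hc
      rcases Multiset.mem_cons.1 hc with rfl | hc'
      · omega
      · exact hall c (Multiset.mem_of_mem_erase hc')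
    · rw [nimSum_cons, nimSum_erase ha, ha1, h0]
      rfl

lemma main_ind : ∀ n : ℕ, ∀ s : Multiset ℕ, s.sum ≤ n →
    (Good s → MiserePPos s) ∧ (¬ Good s → MisereNPos s) := by
  intro n
  induction n using Nat.strong_induction_on with
  | _ n ih =>
    intro s hs
    have hN : ∀ t : Multiset ℕ, ¬ Good t → t.sum < n → MisereNPos t := by
      intro t hBt hlt
      exact (ih t.sum hlt t le_rfl).2 hBt
    constructor
    · intro hG
      refine MiserePPos.mk s (good_exists_move hG) fun t ht => ?_
      exact hN t (good_move hG ht) (lt_of_lt_of_le (move_sum_lt ht) hs)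
    · intro hB
      by_cases hex : ∃ t, NimMove s t
      · obtain ⟨t, ht, hGt⟩ := bad_move hB hex
        have hlt : t.sum < n := lt_of_lt_of_le (move_sum_lt ht) hs
        exact MisereNPos.mk s t ht ((ih t.sum hlt t le_rfl).1 hGt)
      · push_neg at hex
        exact MisereNPos.stuck s hex

lemma excl : ∀ n : ℕ, ∀ s : Multiset ℕ, s.sum ≤ n →
    MiserePPos s → MisereNPos s → False := by
  intro n
  induction n using Nat.strong_induction_on with
  | _ n ih =>
    intro s hs hP hN
    cases hN with
    | stuck _ h =>
      cases hP with
      | mk _ hex _ => obtain ⟨t, ht⟩ := hex; exact h t ht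
    | mk _ t hmv hPt =>
      cases hP with
      | mk _ _ hall =>
        exact ih t.sum (lt_of_lt_of_le (move_sum_lt hmv) hs) t le_rfl hPt (hall t hmv)

lemma pos_iff_good (s : Multiset ℕ) : MiserePPos s ↔ Good s := by
  constructor
  · intro h
    by_contra hB
    exact excl s.sum s le_rfl h ((main_ind s.sum s le_rfl).2 hB)
  · exact (main_ind s.sum s le_rfl).1

end Aux

/-- The map `s ↦ (nimSum s, Large s)` is a homomorphism from the monoid of
positions (multisets under union) to `(ℕ, XOR) × B₁` (where `B₁` is the
two-element join-semilattice, addition being "or"), and the misère-Nim outcome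
is determined by this pair. -/
theorem stmt5 :
    (∀ s t : Multiset ℕ, nimSum (s + t) = nimSum s ^^^ nimSum t) ∧
    (∀ s t : Multiset ℕ, Large (s + t) ↔ Large s ∨ Large t) ∧
    (∀ s t : Multiset ℕ, nimSum s = nimSum t → (Large s ↔ Large t) →
      (MiserePPos s ↔ MiserePPos t)) := by
  refine ⟨nimSum_add, ?_, ?_⟩
  · intro s t
    constructor
    · rintro ⟨a, ha, h2⟩
      rcases Multiset.mem_add.1 ha with h | h
      · exact Or.inl ⟨a, h, h2⟩
      · exact Or.inr ⟨a, h, h2⟩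
    · rintro (⟨a, ha, h2⟩ | ⟨a, ha, h2⟩)
      · exact ⟨a, Multiset.mem_add.2 (Or.inl ha), h2⟩
      · exact ⟨a, Multiset.mem_add.2 (Or.inr ha), h2⟩
  · intro s t hns hL
    rw [pos_iff_good, pos_iff_good]
    unfold Good
    rw [hns, hL]
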